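/- Let β_{ζ,η} be a beta distributed random variable with parameters ζ, η > 0. Then for every integer k ≥ 1, E[(log β_{ζ,η})^k] = Σ_{π ∈ P_k} Π_{Γ ∈ π} q_{#Γ}(ζ,η), where P_k is the set of partitions of {1,...,k}, #Γ is the size of block Γ, and q_j(ζ,η) := ψ_{j-1}(ζ) - ψ_{j-1}(ζ+η). -/

import Mathlib

open MeasureTheory
open scoped Classical NNReal ENNReal

/-- The beta distribution with parameters `a, b`, as a measure on `ℝ`. -/
noncomputable def betaMeasure (a b : ℝ) : Measure ℝ :=
  volume.withDensity fun x =>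
    ENNReal.ofReal (if x ∈ Set.Ioo (0:ℝ) 1 then
      Real.Gamma (a + b) / (Real.Gamma a * Real.Gamma b) * x ^ (a - 1) * (1 - x) ^ (b - 1)
    else 0)

/-- The `k`-th polygamma function. -/
noncomputable def polygamma (k : ℕ) (x : ℝ) : ℝ :=
  iteratedDeriv (k + 1) (fun y => Real.log (Real.Gamma y)) x

/-- `P` is a set partition of `Fin k` (viewed as a finset of nonempty disjoint blocks
covering everything). -/
def IsSetPartition (k : ℕ) (P : Finset (Finset (Fin k))) : Prop :=
  (∀ B ∈ P, B.Nonempty) ∧ ∀ a : Fin k, ∃! B, B ∈ P ∧ a ∈ B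

set_option linter.unusedSectionVars false


section Combinatorics

variable {α : Type*} {β : Type*} [DecidableEq α] [DecidableEq β]

/-- `π` is a set partition of the finset `S`. -/
def isPart (S : Finset α) (π : Finset (Finset α)) : Prop :=
  (∀ B ∈ π, B.Nonempty ∧ B ⊆ S) ∧ ∀ a ∈ S, ∃! B, B ∈ π ∧ a ∈ B

/-- The finset of all set partitions of `S`. -/
noncomputable def Parts (S : Finset α) : Finset (Finset (Finset α)) :=
  S.powerset.powerset.filter (isPart S)

lemma mem_Parts {S : Finset α} {π : Finset (Finset α)} : π ∈ Parts S ↔ isPart S π := by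
  constructor
  · exact fun h => (Finset.mem_filter.1 h).2
  · intro h
    refine Finset.mem_filter.2 ⟨?_, h⟩
    rw [Finset.mem_powerset]
    intro B hB
    rw [Finset.mem_powerset]
    exact (h.1 B hB).2

lemma Parts_empty : Parts (∅ : Finset α) = {∅} := by
  ext π
  rw [mem_Parts, Finset.mem_singleton]
  constructor
  · intro h
    rw [Finset.eq_empty_iff_forall_notMem]
    intro B hB
    exact (h.1 B hB).1.ne_empty (Finset.subset_empty.1 (h.1 B hB).2)
  · rintro rfl
    exact ⟨by simp, by simp⟩

lemma isPart.block_eq {S : Finset α} {π : Finset (Finset α)} (hπ : isPart S π) {a : α}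
    (ha : a ∈ S) {B C : Finset α} (hB : B ∈ π) (haB : a ∈ B) (hC : C ∈ π) (haC : a ∈ C) :
    B = C :=
  ExistsUnique.unique (hπ.2 a ha) ⟨hB, haB⟩ ⟨hC, haC⟩

lemma isPart.not_mem_block {S : Finset α} {π : Finset (Finset α)} (hπ : isPart S π) {a : α}
    (ha : a ∉ S) {B : Finset α} (hB : B ∈ π) : a ∉ B :=
  fun haB => ha ((hπ.1 B hB).2 haB)

/-- Adding a singleton block `{a}` to a partition of `S` gives a partition of `insert a S`. -/
lemma isPart.insert_singleton {S : Finset α} {π : Finset (Finset α)} (hπ : isPart S π)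
    {a : α} (ha : a ∉ S) : isPart (insert a S) (insert {a} π) := by
  constructor
  · intro B hB
    rcases Finset.mem_insert.1 hB with rfl | hB
    · refine ⟨⟨a, Finset.mem_singleton_self a⟩, ?_⟩
      intro b hb
      rw [Finset.mem_singleton] at hb
      exact hb ▸ Finset.mem_insert_self a S
    · exact ⟨(hπ.1 B hB).1, (hπ.1 B hB).2.trans (Finset.subset_insert a S)⟩
  · intro b hbS
    rcases Finset.mem_insert.1 hbS with rfl | hbS
    · refine ⟨{b}, ⟨Finset.mem_insert_self _ _, Finset.mem_singleton_self b⟩, ?_⟩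
      rintro C ⟨hCπ, hbC⟩
      rcases Finset.mem_insert.1 hCπ with rfl | hCπ
      · rfl
      · exact absurd hbC (hπ.not_mem_block ha hCπ)
    · obtain ⟨B, ⟨hBπ, hbB⟩, hun⟩ := hπ.2 b hbS
      refine ⟨B, ⟨Finset.mem_insert_of_mem hBπ, hbB⟩, ?_⟩
      rintro C ⟨hCπ, hbC⟩
      rcases Finset.mem_insert.1 hCπ with rfl | hCπ
      · rw [Finset.mem_singleton] at hbC
        exact absurd (hbC ▸ hbS) ha
      · exact hun C ⟨hCπ, hbC⟩

/-- Enlarging a block of a partition of `S` by a new element `a`. -/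
lemma isPart.insert_into_block {S : Finset α} {π₀ : Finset (Finset α)} (hπ₀ : isPart S π₀)
    {a : α} (ha : a ∉ S) {C : Finset α} (hC : C ∈ π₀) :
    isPart (insert a S) (insert (insert a C) (π₀.erase C)) := by
  have hCS : C ⊆ S := (hπ₀.1 C hC).2
  constructor
  · intro B hB
    rcases Finset.mem_insert.1 hB with rfl | hB
    · refine ⟨⟨a, Finset.mem_insert_self a C⟩, ?_⟩
      intro b hb
      rcases Finset.mem_insert.1 hb with rfl | hb
      · exact Finset.mem_insert_self b S
      · exact Finset.mem_insert_of_mem (hCS hb)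
    · obtain ⟨_, hBπ⟩ := Finset.mem_erase.1 hB
      exact ⟨(hπ₀.1 B hBπ).1, (hπ₀.1 B hBπ).2.trans (Finset.subset_insert a S)⟩
  · intro b hbS
    rcases Finset.mem_insert.1 hbS with rfl | hbS
    · refine ⟨insert b C, ⟨Finset.mem_insert_self _ _, Finset.mem_insert_self b C⟩, ?_⟩
      rintro D ⟨hDmem, hbD⟩
      rcases Finset.mem_insert.1 hDmem with rfl | hDmem
      · rfl
      · exact absurd hbD (hπ₀.not_mem_block ha (Finset.mem_erase.1 hDmem).2)
    · obtain ⟨B, ⟨hBπ, hbB⟩, hun⟩ := hπ₀.2 b hbS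
      have hbna : b ≠ a := fun h => ha (h ▸ hbS)
      by_cases hBC : B = C
      · refine ⟨insert a C, ⟨Finset.mem_insert_self _ _,
          Finset.mem_insert_of_mem (hBC ▸ hbB)⟩, ?_⟩
        rintro D ⟨hDmem, hbD⟩
        rcases Finset.mem_insert.1 hDmem with rfl | hDmem
        · rfl
        · obtain ⟨hDne, hDπ⟩ := Finset.mem_erase.1 hDmem
          exact absurd ((hun D ⟨hDπ, hbD⟩).trans hBC) hDne
      · refine ⟨B, ⟨Finset.mem_insert_of_mem (Finset.mem_erase.2 ⟨hBC, hBπ⟩), hbB⟩, ?_⟩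
        rintro D ⟨hDmem, hbD⟩
        rcases Finset.mem_insert.1 hDmem with rfl | hDmem
        · rcases Finset.mem_insert.1 hbD with h | hbD
          · exact absurd h hbna
          · exact absurd (hun C ⟨hC, hbD⟩).symm hBC
        · exact hun D ⟨(Finset.mem_erase.1 hDmem).2, hbD⟩

lemma singleton_not_mem_insert_into_block {S : Finset α} {π₀ : Finset (Finset α)}
    (hπ₀ : isPart S π₀) {a : α} (ha : a ∉ S) {C : Finset α} (hC : C ∈ π₀) :
    ({a} : Finset α) ∉ insert (insert a C) (π₀.erase C) := by
  intro hmem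
  rcases Finset.mem_insert.1 hmem with h | h
  · obtain ⟨c, hc⟩ := (hπ₀.1 C hC).1
    have : c ∈ ({a} : Finset α) := h ▸ Finset.mem_insert_of_mem hc
    rw [Finset.mem_singleton] at this
    exact ha (this ▸ (hπ₀.1 C hC).2 hc)
  · exact ha ((hπ₀.1 _ (Finset.mem_erase.1 h).2).2 (Finset.mem_singleton_self a))

/-- Removing the element `a` from its block in a partition of `insert a S`. -/
lemma isPart.strip {S : Finset α} {π : Finset (Finset α)} {a : α} (ha : a ∉ S)
    (hπ : isPart (insert a S) π) (hsing : ({a} : Finset α) ∉ π) {B₀ : Finset α}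
    (hB₀π : B₀ ∈ π) (haB₀ : a ∈ B₀) :
    isPart S (insert (B₀.erase a) (π.erase B₀)) := by
  have hB₀ne : B₀ ≠ {a} := fun h => hsing (h ▸ hB₀π)
  have hCne : (B₀.erase a).Nonempty := by
    rcases Finset.eq_empty_or_nonempty (B₀.erase a) with h | h
    · exfalso
      apply hB₀ne
      apply Finset.Subset.antisymm
      · intro b hb
        rw [Finset.mem_singleton]
        by_contra hne
        exact absurd (Finset.mem_erase.2 ⟨hne, hb⟩) (h ▸ Finset.notMem_empty b)
      · intro b hb
        rw [Finset.mem_singleton] at hb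
        exact hb ▸ haB₀
    · exact h
  have hCsub : B₀.erase a ⊆ S := by
    intro b hb
    obtain ⟨hbne, hbB⟩ := Finset.mem_erase.1 hb
    rcases Finset.mem_insert.1 ((hπ.1 B₀ hB₀π).2 hbB) with h | h
    · exact absurd h hbne
    · exact h
  constructor
  · intro B hB
    rcases Finset.mem_insert.1 hB with rfl | hB
    · exact ⟨hCne, hCsub⟩
    · obtain ⟨hBne, hBπ⟩ := Finset.mem_erase.1 hB
      refine ⟨(hπ.1 B hBπ).1, ?_⟩
      intro b hbB
      rcases Finset.mem_insert.1 ((hπ.1 B hBπ).2 hbB) with h | h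
      · exact absurd (hπ.block_eq (Finset.mem_insert_self a S) hBπ (h ▸ hbB) hB₀π haB₀) hBne
      · exact h
  · intro b hbS
    obtain ⟨B, ⟨hBπ, hbB⟩, _⟩ := hπ.2 b (Finset.mem_insert_of_mem hbS)
    have hbna : b ≠ a := fun h => ha (h ▸ hbS)
    by_cases hBB₀ : B = B₀
    · refine ⟨B₀.erase a, ⟨Finset.mem_insert_self _ _,
        Finset.mem_erase.2 ⟨hbna, hBB₀ ▸ hbB⟩⟩, ?_⟩
      rintro D ⟨hDmem, hbD⟩
      rcases Finset.mem_insert.1 hDmem with rfl | hDmem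
      · rfl
      · obtain ⟨hDne, hDπ⟩ := Finset.mem_erase.1 hDmem
        exact absurd (hπ.block_eq (Finset.mem_insert_of_mem hbS) hDπ hbD hB₀π
          (hBB₀ ▸ hbB)) hDne
    · refine ⟨B, ⟨Finset.mem_insert_of_mem (Finset.mem_erase.2 ⟨hBB₀, hBπ⟩), hbB⟩, ?_⟩
      rintro D ⟨hDmem, hbD⟩
      rcases Finset.mem_insert.1 hDmem with rfl | hDmem
      · exact absurd (hπ.block_eq (Finset.mem_insert_of_mem hbS) hBπ hbB hB₀π
          ((Finset.erase_subset a B₀) hbD)) hBB₀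
      · exact hπ.block_eq (Finset.mem_insert_of_mem hbS) (Finset.mem_erase.1 hDmem).2 hbD hBπ hbB

lemma erase_block_not_mem {S : Finset α} {π : Finset (Finset α)} {a : α}
    (hπ : isPart (insert a S) π) {B₀ : Finset α} (hB₀π : B₀ ∈ π) (haB₀ : a ∈ B₀) :
    B₀.erase a ∉ π.erase B₀ := by
  intro hmem
  obtain ⟨hne, hmem'⟩ := Finset.mem_erase.1 hmem
  obtain ⟨b, hb⟩ := (hπ.1 _ hmem').1
  have hbS : b ∈ insert a S := (hπ.1 _ hmem').2 hb
  exact hne (hπ.block_eq hbS hmem' hb hB₀π (Finset.mem_erase.1 hb).2)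

/-- Splitting lemma for sums over partitions of `insert a S`. -/
lemma sum_Parts_insert {S : Finset α} {a : α} (ha : a ∉ S) (g : Finset (Finset α) → ℝ) :
    ∑ π ∈ Parts (insert a S), g π
      = (∑ π ∈ Parts S, g (insert {a} π))
        + ∑ p ∈ (Parts S).sigma (fun π => π), g (insert (insert a p.2) (p.1.erase p.2)) := by
  rw [← Finset.sum_filter_add_sum_filter_not (Parts (insert a S)) (fun π => {a} ∈ π) g]
  congr 1
  · -- partitions having `{a}` as a block
    refine Finset.sum_bij' (i := fun π _ => π.erase {a}) (j := fun π _ => insert {a} π)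
      ?_ ?_ ?_ ?_ ?_
    · intro π hπ
      rw [Finset.mem_filter] at hπ
      obtain ⟨hπP, hsing⟩ := hπ
      rw [mem_Parts] at hπP ⊢
      constructor
      · intro B hB
        rw [Finset.mem_erase] at hB
        obtain ⟨hBne, hBπ⟩ := hB
        refine ⟨(hπP.1 B hBπ).1, ?_⟩
        intro b hbB
        have hbS : b ∈ insert a S := (hπP.1 B hBπ).2 hbB
        rcases Finset.mem_insert.1 hbS with h | h
        · exact absurd (hπP.block_eq (Finset.mem_insert_self a S) hBπ (h ▸ hbB) hsing
            (Finset.mem_singleton_self a)) hBne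
        · exact h
      · intro b hbS
        obtain ⟨B, ⟨hBπ, hbB⟩, hun⟩ := hπP.2 b (Finset.mem_insert_of_mem hbS)
        have hBne : B ≠ {a} := by
          rintro rfl
          rw [Finset.mem_singleton] at hbB
          exact ha (hbB ▸ hbS)
        refine ⟨B, ⟨Finset.mem_erase.2 ⟨hBne, hBπ⟩, hbB⟩, ?_⟩
        rintro C ⟨hCπ, hbC⟩
        exact hun C ⟨(Finset.mem_erase.1 hCπ).2, hbC⟩
    · intro π hπ
      rw [mem_Parts] at hπ
      rw [Finset.mem_filter]
      exact ⟨mem_Parts.2 (hπ.insert_singleton ha), Finset.mem_insert_self _ _⟩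
    · intro π hπ
      rw [Finset.mem_filter] at hπ
      exact Finset.insert_erase hπ.2
    · intro π hπ
      rw [mem_Parts] at hπ
      have : ({a} : Finset α) ∉ π := fun h => ha ((hπ.1 _ h).2 (Finset.mem_singleton_self a))
      exact Finset.erase_insert this
    · intro π hπ
      rw [Finset.mem_filter] at hπ
      rw [Finset.insert_erase hπ.2]
  · -- partitions where the block of `a` has other elements
    refine Finset.sum_bij'
      (i := fun π hπ =>
        ⟨insert ((π.choose (a ∈ ·) (((mem_Parts).1 (Finset.mem_filter.1 hπ).1).2 a
            (Finset.mem_insert_self a S))).erase a)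
          (π.erase (π.choose (a ∈ ·) (((mem_Parts).1 (Finset.mem_filter.1 hπ).1).2 a
            (Finset.mem_insert_self a S)))),
         (π.choose (a ∈ ·) (((mem_Parts).1 (Finset.mem_filter.1 hπ).1).2 a
            (Finset.mem_insert_self a S))).erase a⟩)
      (j := fun p _ => insert (insert a p.2) (p.1.erase p.2))
      ?_ ?_ ?_ ?_ ?_
    · intro π hπ
      obtain ⟨hπP', hsing⟩ := Finset.mem_filter.1 hπ
      have hπP : isPart (insert a S) π := (mem_Parts).1 hπP'
      have hex := hπP.2 a (Finset.mem_insert_self a S)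
      have hB₀π : π.choose (a ∈ ·) hex ∈ π := Finset.choose_mem (a ∈ ·) π hex
      have haB₀ : a ∈ π.choose (a ∈ ·) hex := Finset.choose_property (a ∈ ·) π hex
      set B₀ := π.choose (a ∈ ·) hex with hB₀def
      show (⟨insert (B₀.erase a) (π.erase B₀), B₀.erase a⟩ :
        Σ _ : Finset (Finset α), Finset α) ∈ (Parts S).sigma (fun π => π)
      rw [Finset.mem_sigma]
      exact ⟨mem_Parts.2 (hπP.strip ha hsing hB₀π haB₀), Finset.mem_insert_self _ _⟩
    · rintro ⟨π₀, C⟩ hp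
      rw [Finset.mem_sigma] at hp
      obtain ⟨hπ₀', hC⟩ := hp
      have hπ₀ : isPart S π₀ := (mem_Parts).1 hπ₀'
      rw [Finset.mem_filter]
      exact ⟨mem_Parts.2 (hπ₀.insert_into_block ha hC),
        singleton_not_mem_insert_into_block hπ₀ ha hC⟩
    · -- left inverse
      intro π hπ
      obtain ⟨hπP', hsing⟩ := Finset.mem_filter.1 hπ
      have hπP : isPart (insert a S) π := (mem_Parts).1 hπP'
      have hex := hπP.2 a (Finset.mem_insert_self a S)
      have hB₀π : π.choose (a ∈ ·) hex ∈ π := Finset.choose_mem (a ∈ ·) π hex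
      have haB₀ : a ∈ π.choose (a ∈ ·) hex := Finset.choose_property (a ∈ ·) π hex
      set B₀ := π.choose (a ∈ ·) hex with hB₀def
      show insert (insert a (B₀.erase a)) ((insert (B₀.erase a) (π.erase B₀)).erase
        (B₀.erase a)) = π
      rw [Finset.insert_erase haB₀, Finset.erase_insert (erase_block_not_mem hπP hB₀π haB₀),
        Finset.insert_erase hB₀π]
    · -- right inverse
      rintro ⟨π₀, C⟩ hp
      rw [Finset.mem_sigma] at hp
      obtain ⟨hπ₀', hC⟩ := hp
      have hπ₀ : isPart S π₀ := (mem_Parts).1 hπ₀'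
      have hCS : C ⊆ S := (hπ₀.1 C hC).2
      have haC : a ∉ C := fun h => ha (hCS h)
      have hπP : isPart (insert a S) (insert (insert a C) (π₀.erase C)) :=
        hπ₀.insert_into_block ha hC
      have hex := hπP.2 a (Finset.mem_insert_self a S)
      have hB₀π : (insert (insert a C) (π₀.erase C)).choose (a ∈ ·) hex
          ∈ insert (insert a C) (π₀.erase C) := Finset.choose_mem (a ∈ ·) _ hex
      have haB₀ : a ∈ (insert (insert a C) (π₀.erase C)).choose (a ∈ ·) hex :=
        Finset.choose_property (a ∈ ·) _ hex
      set B₀ := (insert (insert a C) (π₀.erase C)).choose (a ∈ ·) hex with hB₀def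
      have hB₀ : B₀ = insert a C :=
        hπP.block_eq (Finset.mem_insert_self a S) hB₀π haB₀
          (Finset.mem_insert_self _ _) (Finset.mem_insert_self a C)
      have hinsC : insert a C ∉ π₀.erase C :=
        fun h => (hπ₀.not_mem_block ha (Finset.mem_erase.1 h).2) (Finset.mem_insert_self a C)
      show (⟨insert (B₀.erase a) ((insert (insert a C) (π₀.erase C)).erase B₀),
        B₀.erase a⟩ : Σ _ : Finset (Finset α), Finset α) = ⟨π₀, C⟩
      rw [hB₀, Finset.erase_insert haC, Finset.erase_insert hinsC, Finset.insert_erase hC]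
    · -- values agree
      intro π hπ
      obtain ⟨hπP', hsing⟩ := Finset.mem_filter.1 hπ
      have hπP : isPart (insert a S) π := (mem_Parts).1 hπP'
      have hex := hπP.2 a (Finset.mem_insert_self a S)
      have hB₀π : π.choose (a ∈ ·) hex ∈ π := Finset.choose_mem (a ∈ ·) π hex
      have haB₀ : a ∈ π.choose (a ∈ ·) hex := Finset.choose_property (a ∈ ·) π hex
      set B₀ := π.choose (a ∈ ·) hex with hB₀def
      show g π = g (insert (insert a (B₀.erase a)) ((insert (B₀.erase a) (π.erase B₀)).erase
        (B₀.erase a)))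
      rw [Finset.insert_erase haB₀, Finset.erase_insert (erase_block_not_mem hπP hB₀π haB₀),
        Finset.insert_erase hB₀π]

/-- Product form of the splitting lemma. -/
lemma prod_Parts_insert {S : Finset α} {a : α} (ha : a ∉ S) (F : Finset α → ℝ) :
    ∑ π ∈ Parts (insert a S), ∏ B ∈ π, F B
      = (∑ π ∈ Parts S, F {a} * ∏ B ∈ π, F B)
        + ∑ π ∈ Parts S, ∑ C ∈ π, F (insert a C) * ∏ B ∈ π.erase C, F B := by
  rw [sum_Parts_insert ha (fun π => ∏ B ∈ π, F B)]
  congr 1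
  · refine Finset.sum_congr rfl fun π hπ => ?_
    have hπP : isPart S π := mem_Parts.1 hπ
    have hsing : ({a} : Finset α) ∉ π :=
      fun h => ha ((hπP.1 _ h).2 (Finset.mem_singleton_self a))
    rw [Finset.prod_insert hsing]
  · rw [Finset.sum_sigma]
    refine Finset.sum_congr rfl fun π hπ => Finset.sum_congr rfl fun C hC => ?_
    have hπP : isPart S π := mem_Parts.1 hπ
    have hins : insert a C ∉ π.erase C :=
      fun h => (hπP.not_mem_block ha (Finset.mem_erase.1 h).2) (Finset.mem_insert_self a C)
    rw [Finset.prod_insert hins]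

/-- Sums over partitions are invariant under transport along an embedding. -/
lemma sum_Parts_map (e : α ↪ β) (S : Finset α) (F : ℕ → ℝ) :
    ∑ π ∈ Parts (S.map e), ∏ B ∈ π, F B.card = ∑ π ∈ Parts S, ∏ B ∈ π, F B.card := by
  have hpre : ∀ B : Finset α, (B.map e).preimage e e.injective.injOn = B := by
    intro B
    ext x
    simp [Finset.mem_preimage]
  have hmappre : ∀ D : Finset β, D ⊆ S.map e →
      (D.preimage e e.injective.injOn).map e = D := by
    intro D hD
    ext b
    simp only [Finset.mem_map, Finset.mem_preimage]
    constructor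
    · rintro ⟨x, hx, rfl⟩
      exact hx
    · intro hb
      obtain ⟨x, _, rfl⟩ := Finset.mem_map.1 (hD hb)
      exact ⟨x, hb, rfl⟩
  symm
  refine Finset.sum_bij' (i := fun π _ => π.image (fun B => B.map e))
    (j := fun π _ => π.image (fun D => D.preimage e e.injective.injOn)) ?_ ?_ ?_ ?_ ?_
  · intro π hπ
    have hπP : isPart S π := mem_Parts.1 hπ
    rw [mem_Parts]
    constructor
    · intro D hD
      obtain ⟨B, hBπ, rfl⟩ := Finset.mem_image.1 hD
      exact ⟨(Finset.map_nonempty).2 (hπP.1 B hBπ).1,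
        Finset.map_subset_map.2 (hπP.1 B hBπ).2⟩
    · intro b hbS
      obtain ⟨x, hxS, rfl⟩ := Finset.mem_map.1 hbS
      obtain ⟨B, ⟨hBπ, hxB⟩, hun⟩ := hπP.2 x hxS
      refine ⟨B.map e, ⟨Finset.mem_image_of_mem _ hBπ, Finset.mem_map_of_mem e hxB⟩, ?_⟩
      rintro D ⟨hDmem, hxD⟩
      obtain ⟨B', hB'π, rfl⟩ := Finset.mem_image.1 hDmem
      rw [Finset.mem_map'] at hxD
      rw [hun B' ⟨hB'π, hxD⟩]
  · intro π hπ
    have hπP : isPart (S.map e) π := mem_Parts.1 hπ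
    rw [mem_Parts]
    constructor
    · intro P hP
      obtain ⟨D, hDπ, rfl⟩ := Finset.mem_image.1 hP
      constructor
      · obtain ⟨d, hd⟩ := (hπP.1 D hDπ).1
        obtain ⟨x, _, rfl⟩ := Finset.mem_map.1 ((hπP.1 D hDπ).2 hd)
        exact ⟨x, Finset.mem_preimage.2 hd⟩
      · intro x hx
        have : e x ∈ S.map e := (hπP.1 D hDπ).2 (Finset.mem_preimage.1 hx)
        exact (Finset.mem_map' e).1 this
    · intro x hxS
      obtain ⟨D, ⟨hDπ, hxD⟩, hun⟩ := hπP.2 (e x) (Finset.mem_map_of_mem e hxS)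
      refine ⟨D.preimage e e.injective.injOn,
        ⟨Finset.mem_image_of_mem _ hDπ, Finset.mem_preimage.2 hxD⟩, ?_⟩
      rintro P ⟨hPmem, hxP⟩
      obtain ⟨D', hD'π, rfl⟩ := Finset.mem_image.1 hPmem
      rw [hun D' ⟨hD'π, Finset.mem_preimage.1 hxP⟩]
  · intro π hπ
    simp only [Finset.image_image]
    calc π.image (fun B => (B.map e).preimage e e.injective.injOn)
        = π.image id := Finset.image_congr (fun B _ => hpre B)
      _ = π := Finset.image_id
  · intro π hπ
    have hπP : isPart (S.map e) π := mem_Parts.1 hπ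
    simp only [Finset.image_image]
    calc π.image (fun D => (D.preimage e e.injective.injOn).map e)
        = π.image id := Finset.image_congr (fun D hD => hmappre D (hπP.1 D hD).2)
      _ = π := Finset.image_id
  · intro π hπ
    rw [Finset.prod_image (fun B _ B' _ h => Finset.map_injective e h)]
    refine Finset.prod_congr rfl fun B _ => ?_
    rw [Finset.card_map]

end Combinatorics

noncomputable section
open Set

/-- `log ∘ Γ`. -/
def Lg : ℝ → ℝ := fun y => Real.log (Real.Gamma y)

lemma contDiffAt_Lg {n : WithTop ℕ∞} {x : ℝ} (hx : 0 < x) : ContDiffAt ℝ n Lg x := by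
  have hopen : IsOpen {z : ℂ | 0 < z.re} := isOpen_lt continuous_const Complex.continuous_re
  have hdiff : DifferentiableOn ℂ Complex.Gamma {z : ℂ | 0 < z.re} := by
    intro z hz
    refine (Complex.differentiableAt_Gamma z ?_).differentiableWithinAt
    intro m h
    rw [h] at hz
    simp only [Set.mem_setOf_eq, Complex.neg_re, Complex.natCast_re] at hz
    have : (0:ℝ) ≤ m := Nat.cast_nonneg m
    linarith
  have han : AnalyticAt ℂ Complex.Gamma (x : ℂ) :=
    (hdiff.analyticOnNhd hopen) _ (by simpa using hx)
  have hΓC : ContDiffAt ℝ n Complex.Gamma (x : ℂ) := han.contDiffAt.restrict_scalars ℝ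
  have hre : ContDiffAt ℝ n (fun y : ℝ => (Complex.Gamma (y : ℂ)).re) x :=
    Complex.reCLM.contDiff.contDiffAt.comp _
      (hΓC.comp x Complex.ofRealCLM.contDiff.contDiffAt)
  have hΓ : ContDiffAt ℝ n Real.Gamma x := by
    have heq : Real.Gamma = fun y : ℝ => (Complex.Gamma (y : ℂ)).re := by
      funext y
      rw [Complex.Gamma_ofReal, Complex.ofReal_re]
    rw [heq]
    exact hre
  exact (Real.contDiffAt_log.2 (ne_of_gt (Real.Gamma_pos_of_pos hx))).comp x hΓ

lemma iteratedDerivWithin_isOpen' {s : Set ℝ} {f : ℝ → ℝ} (n : ℕ) (hs : IsOpen s) {x : ℝ}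
    (hx : x ∈ s) : iteratedDerivWithin n f s x = iteratedDeriv n f x := by
  rw [iteratedDerivWithin_eq_iteratedFDerivWithin, iteratedDeriv_eq_iteratedFDeriv,
    iteratedFDerivWithin_of_isOpen n hs hx]

lemma hasDerivAt_iteratedDeriv_Lg (n : ℕ) {x : ℝ} (hx : 0 < x) :
    HasDerivAt (iteratedDeriv n Lg) (iteratedDeriv (n + 1) Lg x) x := by
  rw [iteratedDeriv_succ]
  have hco : ContDiffOn ℝ (n + 1 : ℕ) Lg (Ioi (0:ℝ)) :=
    fun y hy => (contDiffAt_Lg hy).contDiffWithinAt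
  have hdo : DifferentiableOn ℝ (iteratedDerivWithin n Lg (Ioi 0)) (Ioi 0) :=
    hco.differentiableOn_iteratedDerivWithin (by exact_mod_cast n.lt_succ_self)
      isOpen_Ioi.uniqueDiffOn
  have h1 : DifferentiableAt ℝ (iteratedDerivWithin n Lg (Ioi 0)) x :=
    (hdo x hx).differentiableAt (isOpen_Ioi.mem_nhds hx)
  have heq : iteratedDeriv n Lg =ᶠ[nhds x] iteratedDerivWithin n Lg (Ioi 0) := by
    filter_upwards [isOpen_Ioi.mem_nhds hx] with y hy
    exact (iteratedDerivWithin_isOpen' n isOpen_Ioi hy).symm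
  exact (h1.congr_of_eventuallyEq heq).hasDerivAt

/-- `q_j` of the informal statement, with block-size indexing. -/
def Qf (η : ℝ) (j : ℕ) (z : ℝ) : ℝ := iteratedDeriv j Lg z - iteratedDeriv j Lg (z + η)

lemma hasDerivAt_Qf {η : ℝ} (hη : 0 < η) (j : ℕ) {z : ℝ} (hz : 0 < z) :
    HasDerivAt (Qf η j) (Qf η (j + 1) z) z := by
  have h1 := hasDerivAt_iteratedDeriv_Lg j hz
  have h2 : HasDerivAt (fun w => iteratedDeriv j Lg (w + η))
      (iteratedDeriv (j + 1) Lg (z + η)) z := by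
    have h := hasDerivAt_iteratedDeriv_Lg j (by linarith : (0:ℝ) < z + η)
    simpa [Function.comp_def] using h.comp z ((hasDerivAt_id z).add_const η)
  rw [show Qf η j = fun w => iteratedDeriv j Lg w - iteratedDeriv j Lg (w + η) from rfl]
  simpa [Qf, Pi.sub_def] using h1.sub h2

/-- The Beta function value. -/
def Bf (η : ℝ) (z : ℝ) : ℝ := Real.Gamma z * Real.Gamma η / Real.Gamma (z + η)

lemma Bf_eq_exp {η : ℝ} (hη : 0 < η) {z : ℝ} (hz : 0 < z) :
    Bf η z = Real.exp (Lg z + Lg η - Lg (z + η)) := by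
  rw [Bf]
  simp only [Lg]
  rw [Real.exp_sub, Real.exp_add, Real.exp_log (Real.Gamma_pos_of_pos hz),
    Real.exp_log (Real.Gamma_pos_of_pos hη),
    Real.exp_log (Real.Gamma_pos_of_pos (by linarith : (0:ℝ) < z + η))]

lemma hasDerivAt_Bf {η : ℝ} (hη : 0 < η) {z : ℝ} (hz : 0 < z) :
    HasDerivAt (Bf η) (Qf η 1 z * Bf η z) z := by
  have h1 := hasDerivAt_iteratedDeriv_Lg 0 hz
  have h2 : HasDerivAt (fun w => iteratedDeriv 0 Lg (w + η)) (iteratedDeriv 1 Lg (z + η)) z := by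
    have h := hasDerivAt_iteratedDeriv_Lg 0 (by linarith : (0:ℝ) < z + η)
    simpa [Function.comp_def] using h.comp z ((hasDerivAt_id z).add_const η)
  rw [iteratedDeriv_zero] at h1 h2
  have hL : HasDerivAt (fun w => Lg w + Lg η - Lg (w + η)) (Qf η 1 z) z := by
    have := (h1.add_const (Lg η)).sub h2
    simpa [Qf, Pi.sub_def] using this
  have hE := hL.exp
  have heq : Bf η =ᶠ[nhds z] fun w => Real.exp (Lg w + Lg η - Lg (w + η)) := by
    filter_upwards [isOpen_Ioi.mem_nhds (show z ∈ Ioi (0:ℝ) from hz)] with w hw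
    exact Bf_eq_exp hη hw
  have := hE.congr_of_eventuallyEq heq
  rwa [← Bf_eq_exp hη hz, mul_comm] at this

/-- A logarithm bound: `|log x| ≤ ε⁻¹ x^(-ε)` on `(0,1]`. -/
lemma abs_log_le_rpow {x ε : ℝ} (hx : 0 < x) (hx1 : x ≤ 1) (hε : 0 < ε) :
    |Real.log x| ≤ ε⁻¹ * x ^ (-ε) := by
  rw [abs_of_nonpos (Real.log_nonpos hx.le hx1)]
  have h1 : Real.log (x ^ (-ε)) = -ε * Real.log x := Real.log_rpow hx _
  have hpos : 0 < x ^ (-ε) := Real.rpow_pos_of_pos hx _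
  have h2 : -ε * Real.log x ≤ x ^ (-ε) := by
    rw [← h1]
    exact (Real.log_le_sub_one_of_pos hpos).trans (by linarith)
  calc -Real.log x = ε⁻¹ * (-ε * Real.log x) := by field_simp
    _ ≤ ε⁻¹ * x ^ (-ε) := mul_le_mul_of_nonneg_left h2 (inv_nonneg.2 hε.le)

/-- Integrability of the Beta integrand on `(0,1)`. -/
lemma betaIntegrand_integrableOn {a b : ℝ} (ha : 0 < a) (hb : 0 < b) :
    IntegrableOn (fun x : ℝ => x ^ (a - 1) * (1 - x) ^ (b - 1)) (Ioo 0 1) := by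
  have hc := Complex.betaIntegral_convergent (u := (a : ℂ)) (v := (b : ℂ))
    (by simpa using ha) (by simpa using hb)
  rw [intervalIntegrable_iff_integrableOn_Ioc_of_le zero_le_one] at hc
  have hre := hc.re
  have hmono : IntegrableOn (fun x : ℝ => RCLike.re ((x:ℂ) ^ ((a:ℂ) - 1) * (1 - (x:ℂ)) ^ ((b:ℂ) - 1))) (Ioo 0 1) :=
    IntegrableOn.mono_set hre Ioo_subset_Ioc_self
  refine hmono.congr ?_
  rw [Filter.eventuallyEq_iff_exists_mem]
  refine ⟨Ioo 0 1, ?_, ?_⟩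
  · rw [mem_ae_iff]
    simp [Measure.restrict_apply (measurableSet_Ioo.compl)]
  · intro x hx
    have hx0 : (0:ℝ) ≤ x := hx.1.le
    have hx1 : (0:ℝ) ≤ 1 - x := by linarith [hx.2]
    have e1 : ((x:ℂ) ^ ((a:ℂ) - 1)) = ((x ^ (a - 1) : ℝ) : ℂ) := by
      rw [show ((a:ℂ) - 1) = ((a - 1 : ℝ) : ℂ) by push_cast; ring]
      exact (Complex.ofReal_cpow hx0 _).symm
    have e2 : (((1:ℂ) - x) ^ ((b:ℂ) - 1)) = (((1 - x) ^ (b - 1) : ℝ) : ℂ) := by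
      rw [show ((1:ℂ) - x) = (((1 - x : ℝ)) : ℂ) by push_cast; ring,
        show ((b:ℂ) - 1) = ((b - 1 : ℝ) : ℂ) by push_cast; ring]
      exact (Complex.ofReal_cpow hx1 _).symm
    show RCLike.re ((x:ℂ) ^ ((a:ℂ) - 1) * (1 - (x:ℂ)) ^ ((b:ℂ) - 1)) = _
    rw [e1, e2, ← Complex.ofReal_mul]
    simp

lemma integrableOn_logpow_beta (k : ℕ) {a b : ℝ} (ha : 0 < a) (hb : 0 < b) :
    IntegrableOn (fun x : ℝ => |Real.log x| ^ k * x ^ (a - 1) * (1 - x) ^ (b - 1)) (Ioo 0 1) := by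
  set ε : ℝ := a / (2 * (k + 1)) with hεdef
  have hε0 : 0 < ε := by positivity
  have hbase := betaIntegrand_integrableOn (half_pos ha) hb
  refine ((hbase.const_mul (ε⁻¹ ^ k)).mono' ?_ ?_)
  · refine AEStronglyMeasurable.mul (AEStronglyMeasurable.mul ?_ ?_) ?_
    · exact (Real.measurable_log.abs.pow_const k).aestronglyMeasurable
    · exact (show Measurable fun x : ℝ => x ^ (a-1) by measurability).aestronglyMeasurable
    · exact (show Measurable fun x : ℝ => (1-x) ^ (b-1) by fun_prop).aestronglyMeasurable
  · rw [ae_restrict_iff' measurableSet_Ioo]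
    refine Filter.Eventually.of_forall fun x hx => ?_
    obtain ⟨hx0, hx1⟩ := hx
    have hxp : 0 < x ^ (a - 1) := Real.rpow_pos_of_pos hx0 _
    have h1xp : 0 < (1 - x) ^ (b - 1) := Real.rpow_pos_of_pos (by linarith) _
    have hlog : |Real.log x| ^ k ≤ ε⁻¹ ^ k * x ^ (-(a/2)) := by
      have h1 : |Real.log x| ^ k ≤ (ε⁻¹ * x ^ (-ε)) ^ k :=
        pow_le_pow_left₀ (abs_nonneg _) (abs_log_le_rpow hx0 hx1.le hε0) k
      have h2 : (ε⁻¹ * x ^ (-ε)) ^ k = ε⁻¹ ^ k * x ^ (-(ε * k)) := by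
        rw [mul_pow, ← Real.rpow_natCast (x ^ (-ε)) k, ← Real.rpow_mul hx0.le]
        ring_nf
      have h3 : x ^ (-(ε * k)) ≤ x ^ (-(a/2)) := by
        apply Real.rpow_le_rpow_of_exponent_ge hx0 hx1.le
        have hk0 : (0:ℝ) ≤ k := Nat.cast_nonneg k
        have : ε * k ≤ a / 2 := by
          rw [hεdef, div_mul_eq_mul_div,
            div_le_div_iff₀ (by positivity) (by norm_num : (0:ℝ) < 2)]
          nlinarith [ha.le]
        linarith
      calc |Real.log x| ^ k ≤ (ε⁻¹ * x ^ (-ε)) ^ k := h1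
        _ = ε⁻¹ ^ k * x ^ (-(ε * k)) := h2
        _ ≤ ε⁻¹ ^ k * x ^ (-(a/2)) :=
            mul_le_mul_of_nonneg_left h3 (pow_nonneg (inv_nonneg.2 hε0.le) k)
    have key : |Real.log x| ^ k * x ^ (a - 1) * (1 - x) ^ (b - 1)
        ≤ ε⁻¹ ^ k * (x ^ (a/2 - 1) * (1 - x) ^ (b - 1)) := by
      have := mul_le_mul_of_nonneg_right hlog hxp.le
      have h4 : x ^ (-(a/2)) * x ^ (a - 1) = x ^ (a/2 - 1) := by
        rw [← Real.rpow_add hx0]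
        ring_nf
      calc |Real.log x| ^ k * x ^ (a - 1) * (1 - x) ^ (b - 1)
          ≤ ε⁻¹ ^ k * x ^ (-(a/2)) * x ^ (a - 1) * (1 - x) ^ (b - 1) := by
            apply mul_le_mul_of_nonneg_right _ h1xp.le
            exact this
        _ = ε⁻¹ ^ k * (x ^ (a/2 - 1) * (1 - x) ^ (b - 1)) := by
            rw [mul_assoc (ε⁻¹ ^ k), h4, mul_assoc]
    rw [Real.norm_eq_abs, abs_of_nonneg (by positivity)]
    exact key

lemma integrableOn_logpow_beta' (k : ℕ) {a b : ℝ} (ha : 0 < a) (hb : 0 < b) :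
    IntegrableOn (fun x : ℝ => (Real.log x) ^ k * x ^ (a - 1) * (1 - x) ^ (b - 1)) (Ioo 0 1) := by
  refine (integrableOn_logpow_beta k ha hb).mono' ?_ ?_
  · refine AEStronglyMeasurable.mul (AEStronglyMeasurable.mul ?_ ?_) ?_
    · exact (Real.measurable_log.pow_const k).aestronglyMeasurable
    · exact (show Measurable fun x : ℝ => x ^ (a-1) by measurability).aestronglyMeasurable
    · exact (show Measurable fun x : ℝ => (1-x) ^ (b-1) by fun_prop).aestronglyMeasurable
  · rw [ae_restrict_iff' measurableSet_Ioo]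
    refine Filter.Eventually.of_forall fun x hx => ?_
    obtain ⟨hx0, hx1⟩ := hx
    have hxp : 0 < x ^ (a - 1) := Real.rpow_pos_of_pos hx0 _
    have h1xp : 0 < (1 - x) ^ (b - 1) := Real.rpow_pos_of_pos (by linarith) _
    rw [Real.norm_eq_abs, abs_mul, abs_mul, abs_pow, abs_of_pos hxp, abs_of_pos h1xp]

/-- The moment integrals. -/
def If (η : ℝ) (k : ℕ) (z : ℝ) : ℝ :=
  ∫ x in Ioo (0:ℝ) 1, (Real.log x) ^ k * x ^ (z - 1) * (1 - x) ^ (η - 1)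

lemma hasDerivAt_If {η : ℝ} (hη : 0 < η) (k : ℕ) {ζ : ℝ} (hζ : 0 < ζ) :
    HasDerivAt (If η k) (If η (k + 1) ζ) ζ := by
  have hmeasF : ∀ z : ℝ, AEStronglyMeasurable
      (fun x : ℝ => (Real.log x) ^ k * x ^ (z - 1) * (1 - x) ^ (η - 1))
      (volume.restrict (Ioo (0:ℝ) 1)) := by
    intro z
    refine AEStronglyMeasurable.mul (AEStronglyMeasurable.mul ?_ ?_) ?_
    · exact (Real.measurable_log.pow_const k).aestronglyMeasurable
    · exact (show Measurable fun x : ℝ => x ^ (z-1) by measurability).aestronglyMeasurable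
    · exact (show Measurable fun x : ℝ => (1-x) ^ (η-1) by fun_prop).aestronglyMeasurable
  have hmeasF' : AEStronglyMeasurable
      (fun x : ℝ => (Real.log x) ^ (k+1) * x ^ (ζ - 1) * (1 - x) ^ (η - 1))
      (volume.restrict (Ioo (0:ℝ) 1)) := by
    refine AEStronglyMeasurable.mul (AEStronglyMeasurable.mul ?_ ?_) ?_
    · exact (Real.measurable_log.pow_const (k+1)).aestronglyMeasurable
    · exact (show Measurable fun x : ℝ => x ^ (ζ-1) by measurability).aestronglyMeasurable
    · exact (show Measurable fun x : ℝ => (1-x) ^ (η-1) by fun_prop).aestronglyMeasurable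
  have key := hasDerivAt_integral_of_dominated_loc_of_deriv_le
    (μ := volume.restrict (Ioo (0:ℝ) 1)) (x₀ := ζ)
    (F := fun z x => (Real.log x) ^ k * x ^ (z - 1) * (1 - x) ^ (η - 1))
    (F' := fun z x => (Real.log x) ^ (k+1) * x ^ (z - 1) * (1 - x) ^ (η - 1))
    (bound := fun x => |Real.log x| ^ (k+1) * x ^ (ζ/2 - 1) * (1 - x) ^ (η - 1))
    (Metric.ball_mem_nhds ζ (half_pos hζ))
    (Filter.Eventually.of_forall fun z => hmeasF z)
    (integrableOn_logpow_beta' k hζ hη)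
    hmeasF'
    ?_
    (integrableOn_logpow_beta (k+1) (half_pos hζ) hη)
    ?_
  · exact key.2
  · -- bound
    rw [ae_restrict_iff' measurableSet_Ioo]
    refine Filter.Eventually.of_forall fun x hx => ?_
    intro z hz
    obtain ⟨hx0, hx1⟩ := hx
    rw [Metric.mem_ball, Real.dist_eq, abs_sub_lt_iff] at hz
    have hz1 : ζ/2 - 1 ≤ z - 1 := by linarith
    have hxp : 0 < x ^ (z - 1) := Real.rpow_pos_of_pos hx0 _
    have h1xp : 0 < (1 - x) ^ (η - 1) := Real.rpow_pos_of_pos (by linarith) _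
    rw [Real.norm_eq_abs, abs_mul, abs_mul, abs_pow, abs_of_pos hxp, abs_of_pos h1xp]
    have hmono : x ^ (z - 1) ≤ x ^ (ζ/2 - 1) :=
      Real.rpow_le_rpow_of_exponent_ge hx0 hx1.le hz1
    have h1 : |Real.log x| ^ (k+1) * x ^ (z - 1) ≤ |Real.log x| ^ (k+1) * x ^ (ζ/2 - 1) :=
      mul_le_mul_of_nonneg_left hmono (pow_nonneg (abs_nonneg _) _)
    exact mul_le_mul_of_nonneg_right h1 h1xp.le
  · -- differentiability
    rw [ae_restrict_iff' measurableSet_Ioo]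
    refine Filter.Eventually.of_forall fun x hx => ?_
    intro z _
    obtain ⟨hx0, _⟩ := hx
    have hrpow : HasDerivAt (fun w : ℝ => x ^ (w - 1)) (x ^ (z - 1) * Real.log x) z := by
      have h := (Real.hasStrictDerivAt_const_rpow hx0 (z - 1)).hasDerivAt
      have h2 := h.comp z ((hasDerivAt_id z).sub_const 1)
      simpa [Function.comp_def] using h2
    have h3 := (hrpow.const_mul ((Real.log x) ^ k)).mul_const ((1 - x) ^ (η - 1))
    convert h3 using 1
    · rfl
    ring

lemma If_zero {η : ℝ} (hη : 0 < η) {z : ℝ} (hz : 0 < z) : If η 0 z = Bf η z := by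
  have h0 : If η 0 z = ∫ x in Ioo (0:ℝ) 1, x ^ (z - 1) * (1 - x) ^ (η - 1) := by
    rw [If]
    refine setIntegral_congr_fun measurableSet_Ioo fun x _ => ?_
    simp
  have h1 : (∫ x in (0:ℝ)..1, x ^ (z - 1) * (1 - x) ^ (η - 1))
      = ∫ x in Ioo (0:ℝ) 1, x ^ (z - 1) * (1 - x) ^ (η - 1) := by
    rw [intervalIntegral.integral_of_le zero_le_one, integral_Ioc_eq_integral_Ioo]
  have h2 : Complex.betaIntegral z η
      = ((∫ x in (0:ℝ)..1, x ^ (z - 1) * (1 - x) ^ (η - 1) : ℝ) : ℂ) := by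
    rw [Complex.betaIntegral, ← intervalIntegral.integral_ofReal]
    refine intervalIntegral.integral_congr fun x hx => ?_
    rw [Set.uIcc_of_le zero_le_one] at hx
    have hx0 : (0:ℝ) ≤ x := hx.1
    have hx1 : (0:ℝ) ≤ 1 - x := by linarith [hx.2]
    rw [show ((z:ℂ) - 1) = ((z - 1 : ℝ) : ℂ) by push_cast; ring,
      show ((1:ℂ) - x) = (((1 - x : ℝ)) : ℂ) by push_cast; ring,
      show ((η:ℂ) - 1) = ((η - 1 : ℝ) : ℂ) by push_cast; ring,
      ← Complex.ofReal_cpow hx0, ← Complex.ofReal_cpow hx1, ← Complex.ofReal_mul]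
  have h3 := Complex.Gamma_mul_Gamma_eq_betaIntegral
    (s := (z:ℂ)) (t := (η:ℂ)) (by simpa using hz) (by simpa using hη)
  rw [h2, ← Complex.ofReal_add, Complex.Gamma_ofReal, Complex.Gamma_ofReal,
    Complex.Gamma_ofReal, ← Complex.ofReal_mul, ← Complex.ofReal_mul] at h3
  have h4 : Real.Gamma z * Real.Gamma η
      = Real.Gamma (z + η) * ∫ x in (0:ℝ)..1, x ^ (z - 1) * (1 - x) ^ (η - 1) :=
    Complex.ofReal_injective h3
  have h5 : Real.Gamma (z + η) ≠ 0 :=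
    (Real.Gamma_pos_of_pos (by linarith : (0:ℝ) < z + η)).ne'
  rw [Bf, eq_comm, div_eq_iff h5, h0, ← h1, h4]
  ring



noncomputable section Glue

open Set

variable {η : ℝ}

/-- Partition sums of products of `Qf`. -/
def Mf (η : ℝ) (k : ℕ) (z : ℝ) : ℝ :=
  ∑ π ∈ Parts (Finset.range k), ∏ B ∈ π, Qf η B.card z

/-- The derivative of `Mf` in `z`. -/
def Mdf (η : ℝ) (k : ℕ) (z : ℝ) : ℝ :=
  ∑ π ∈ Parts (Finset.range k), ∑ C ∈ π,
    (∏ B ∈ π.erase C, Qf η B.card z) * Qf η (C.card + 1) z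

lemma hasDerivAt_Mf (hη : 0 < η) (k : ℕ) {z : ℝ} (hz : 0 < z) :
    HasDerivAt (Mf η k) (Mdf η k z) z := by
  have : ∀ π ∈ Parts (Finset.range k),
      HasDerivAt (fun w => ∏ B ∈ π, Qf η B.card w)
        (∑ C ∈ π, (∏ B ∈ π.erase C, Qf η B.card z) • Qf η (C.card + 1) z) z :=
    fun π _ => HasDerivAt.fun_finsetProd (fun C _ => hasDerivAt_Qf hη C.card hz)
  have h := HasDerivAt.fun_sum this
  rw [show Mf η k = fun y => ∑ π ∈ Parts (Finset.range k), ∏ B ∈ π, Qf η B.card y from rfl]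
  simpa [Mf, Mdf, smul_eq_mul] using h

lemma Mf_succ (k : ℕ) (z : ℝ) :
    Mf η (k + 1) z = Qf η 1 z * Mf η k z + Mdf η k z := by
  rw [Mf, Finset.range_add_one,
    prod_Parts_insert Finset.notMem_range_self (fun B => Qf η B.card z)]
  congr 1
  · rw [Mf, Finset.mul_sum]
    refine Finset.sum_congr rfl fun π hπ => ?_
    rw [Finset.card_singleton]
  · rw [Mdf]
    refine Finset.sum_congr rfl fun π hπ => Finset.sum_congr rfl fun C hC => ?_
    have hπP : isPart (Finset.range k) π := mem_Parts.1 hπ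
    have hkC : k ∉ C := fun h => Finset.notMem_range_self ((hπP.1 C hC).2 h)
    rw [Finset.card_insert_of_notMem hkC, mul_comm]

lemma If_eq_Mf (hη : 0 < η) (k : ℕ) : ∀ {z : ℝ}, 0 < z → If η k z = Mf η k z * Bf η z := by
  induction k with
  | zero =>
    intro z hz
    rw [If_zero hη hz, Mf, Finset.range_zero, Parts_empty]
    simp
  | succ k ih =>
    intro z hz
    have h1 : HasDerivAt (If η k) (If η (k + 1) z) z := hasDerivAt_If hη k hz
    have h2 : HasDerivAt (fun w => Mf η k w * Bf η w)
        (Mdf η k z * Bf η z + Mf η k z * (Qf η 1 z * Bf η z)) z :=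
      (hasDerivAt_Mf hη k hz).mul (hasDerivAt_Bf hη hz)
    have heq : If η k =ᶠ[nhds z] fun w => Mf η k w * Bf η w := by
      filter_upwards [isOpen_Ioi.mem_nhds (hz : z ∈ Ioi (0:ℝ))] with w hw
      exact ih hw
    have h1' : HasDerivAt (If η k)
        (Mdf η k z * Bf η z + Mf η k z * (Qf η 1 z * Bf η z)) z :=
      h2.congr_of_eventuallyEq heq
    have := h1.unique h1'
    rw [this, Mf_succ]
    ring

lemma filter_isSetPartition_eq (k : ℕ) :
    (Finset.univ : Finset (Finset (Finset (Fin k)))).filter (IsSetPartition k)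
      = Parts (Finset.univ : Finset (Fin k)) := by
  ext π
  simp only [Finset.mem_filter, Finset.mem_univ, true_and, mem_Parts]
  constructor
  · intro h
    exact ⟨fun B hB => ⟨h.1 B hB, Finset.subset_univ B⟩, fun a _ => h.2 a⟩
  · intro h
    exact ⟨fun B hB => (h.1 B hB).1, fun a => h.2 a (Finset.mem_univ a)⟩

end Glue

theorem log_beta_moments (ζ η : ℝ) (hζ : 0 < ζ) (hη : 0 < η) (k : ℕ) (hk : 1 ≤ k) :
    ∫ x, (Real.log x) ^ k ∂(betaMeasure ζ η)
      = ∑ π ∈ (Finset.univ : Finset (Finset (Finset (Fin k)))).filter (IsSetPartition k),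
          ∏ B ∈ π, (polygamma (B.card - 1) ζ - polygamma (B.card - 1) (ζ + η)) := by
  classical
  set C : ℝ := Real.Gamma (ζ + η) / (Real.Gamma ζ * Real.Gamma η) with hCdef
  set df : ℝ → ℝ := fun x =>
    if x ∈ Set.Ioo (0:ℝ) 1 then C * x ^ (ζ - 1) * (1 - x) ^ (η - 1) else 0 with hdfdef
  have hdf_meas : Measurable df := by
    refine Measurable.ite measurableSet_Ioo ?_ measurable_const
    refine Measurable.mul (Measurable.mul measurable_const ?_) ?_
    · exact (show Measurable fun x : ℝ => x ^ (ζ-1) by measurability)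
    · exact (show Measurable fun x : ℝ => (1-x) ^ (η-1) by fun_prop)
  have hdf_nonneg : ∀ x, 0 ≤ df x := by
    intro x
    rw [hdfdef]
    dsimp only
    split_ifs with h
    · have hx0 := h.1
      have hx1 := h.2
      have hC : 0 < C := div_pos (Real.Gamma_pos_of_pos (by linarith))
        (mul_pos (Real.Gamma_pos_of_pos hζ) (Real.Gamma_pos_of_pos hη))
      exact le_of_lt (mul_pos (mul_pos hC (Real.rpow_pos_of_pos hx0 _))
        (Real.rpow_pos_of_pos (by linarith) _))
    · exact le_refl 0
  have hC : 0 < C := div_pos (Real.Gamma_pos_of_pos (by linarith))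
    (mul_pos (Real.Gamma_pos_of_pos hζ) (Real.Gamma_pos_of_pos hη))
  have hμ : betaMeasure ζ η = volume.withDensity fun x => ENNReal.ofReal (df x) := rfl
  have hLHS : ∫ x, (Real.log x) ^ k ∂(betaMeasure ζ η) = Mf η k ζ := by
    calc ∫ x, (Real.log x) ^ k ∂(betaMeasure ζ η)
        = ∫ x, ((df x).toNNReal : ℝ≥0) • (Real.log x) ^ k := by
          rw [hμ]
          exact integral_withDensity_eq_integral_smul hdf_meas.real_toNNReal _
      _ = ∫ x, df x * (Real.log x) ^ k := by
          congr 1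
          funext x
          rw [NNReal.smul_def, Real.coe_toNNReal _ (hdf_nonneg x), smul_eq_mul]
      _ = ∫ x, Set.indicator (Set.Ioo (0:ℝ) 1)
            (fun x => C * x ^ (ζ-1) * (1-x) ^ (η-1) * (Real.log x) ^ k) x := by
          congr 1
          funext x
          rw [Set.indicator_apply, hdfdef]
          dsimp only
          split_ifs with h
          · rfl
          · rw [zero_mul]
      _ = ∫ x in Set.Ioo (0:ℝ) 1, C * x ^ (ζ-1) * (1-x) ^ (η-1) * (Real.log x) ^ k :=
          integral_indicator measurableSet_Ioo
      _ = ∫ x in Set.Ioo (0:ℝ) 1, C * ((Real.log x) ^ k * x ^ (ζ-1) * (1-x) ^ (η-1)) :=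
          setIntegral_congr_fun measurableSet_Ioo fun x _ => by ring
      _ = C * If η k ζ := by
          rw [If]
          exact integral_const_mul C _
      _ = C * (Mf η k ζ * Bf η ζ) := by rw [If_eq_Mf hη k hζ]
      _ = Mf η k ζ := by
          have hone : C * Bf η ζ = 1 := by
            rw [hCdef, Bf]
            field_simp
          rw [mul_comm (Mf η k ζ) (Bf η ζ), ← mul_assoc, hone, one_mul]
  rw [hLHS, filter_isSetPartition_eq k]
  have hQ : ∑ π ∈ Parts (Finset.univ : Finset (Fin k)), ∏ B ∈ π,
        (polygamma (B.card - 1) ζ - polygamma (B.card - 1) (ζ + η))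
      = ∑ π ∈ Parts (Finset.univ : Finset (Fin k)), ∏ B ∈ π, Qf η B.card ζ := by
    refine Finset.sum_congr rfl fun π hπ => Finset.prod_congr rfl fun B hB => ?_
    have h1 : 1 ≤ B.card := Finset.card_pos.2 ((mem_Parts.1 hπ).1 B hB).1
    simp only [polygamma, Qf]
    rw [Nat.sub_add_cancel h1]
    rfl
  rw [hQ]
  have hmap := sum_Parts_map Fin.valEmbedding (Finset.univ : Finset (Fin k))
    (fun n => Qf η n ζ)
  rw [Fin.map_valEmbedding_univ] at hmap
  rw [← hmap, Mf, Nat.Iio_eq_range]
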